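/- Let X be a real Banach space and Φ : X → ℝ ∪ {+∞} proper, lsc, convex, x̄ ∈ dom Φ, ε ≥ 0, λ ∈ ℝ. Assume the sublevel set [Φ ≤ λ] is empty and ε ≥ Φ(x̄) − λ. Then for every v in the negative polar cone of ∂_ε Φ(x̄) (i.e., ⟨x*, v⟩ ≤ 0 for all x* ∈ ∂_ε Φ(x̄), with ∂_ε Φ(x̄) nonempty), one has Φ(x̄ + t v) ≤ Φ(x̄) for all t > 0; equivalently, v belongs to the recession cone of the sublevel set [Φ ≤ Φ(x̄)]. -/

import Mathlib

open Set Topology Filter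

/-- The ε-subdifferential of `Φ` at `x`. -/
def SubdiffAt {X : Type*} [NormedAddCommGroup X] [NormedSpace ℝ X]
    (Φ : X → EReal) (x : X) (ε : ℝ) : Set (X →L[ℝ] ℝ) :=
  {p | ∀ u : X, Φ x + ((p (u - x) : ℝ) : EReal) ≤ Φ u + ((ε : ℝ) : EReal)}

theorem stmt8 {X : Type*} [NormedAddCommGroup X] [NormedSpace ℝ X] [CompleteSpace X]
    (Φ : X → EReal)
    (hproper : ∃ z, Φ z ≠ ⊤) (hbot : ∀ z, Φ z ≠ ⊥)
    (hconv : ∀ x y : X, ∀ t : ℝ, 0 ≤ t → t ≤ 1 →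
      Φ (t • x + (1 - t) • y) ≤ ((t : ℝ) : EReal) * Φ x + (((1 - t : ℝ)) : EReal) * Φ y)
    (hlsc : LowerSemicontinuous Φ)
    (xb : X) (c : ℝ) (hc : Φ xb = (c : EReal))
    (lam : ℝ) (hempty : ∀ u : X, ¬ (Φ u ≤ ((lam : ℝ) : EReal)))
    (ε : ℝ) (hε : c - lam ≤ ε)
    (hne : (SubdiffAt Φ xb ε).Nonempty)
    (v : X) (hv : ∀ p ∈ SubdiffAt Φ xb ε, p v ≤ 0) :
    ∀ t : ℝ, 0 < t → Φ (xb + t • v) ≤ Φ xb := by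
  intro s hs
  by_contra hgt
  rw [not_le, hc] at hgt
  -- basic facts
  have hreal : ∀ (u₁ : X) (m : ℝ), Φ u₁ ≤ (m : EReal) → ∃ a : ℝ, Φ u₁ = (a : EReal) ∧ a ≤ m := by
    intro u₁ m hm
    have hnt : Φ u₁ ≠ ⊤ := by
      intro h; rw [h] at hm; exact (not_le.mpr (EReal.coe_lt_top m)) hm
    refine ⟨(Φ u₁).toReal, (EReal.coe_toReal hnt (hbot u₁)).symm, ?_⟩
    rw [← EReal.coe_le_coe_iff, EReal.coe_toReal hnt (hbot u₁)]; exact hm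
  have hlam_lt : ∀ u : X, ((lam : ℝ) : EReal) < Φ u := fun u => not_le.mp (hempty u)
  have hlam_lt_c : lam < c := by
    have := hlam_lt xb
    rw [hc] at this
    exact_mod_cast this
  have hεpos : 0 < ε := lt_of_lt_of_le (by linarith) hε
  -- pick β with c < β < Φ (xb + s • v)
  obtain ⟨β, hβ1, hβ2⟩ := EReal.lt_iff_exists_real_btwn.mp hgt
  have hcβ : c < β := by exact_mod_cast hβ1
  -- the function along the ray
  set h : ℝ → EReal := fun r => Φ (xb + r • v) with hh
  have hlsch : LowerSemicontinuous h := by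
    apply LowerSemicontinuous.comp (g := fun r : ℝ => xb + r • v) hlsc
    exact continuous_const.add ((continuous_id.smul continuous_const))
  -- uniform gap above lam on [0, s]
  have hgap : ∃ γ : ℝ, 0 < γ ∧ ∀ r ∈ Icc (0:ℝ) s, ((lam + γ : ℝ) : EReal) ≤ h r := by
    by_contra hng
    push_neg at hng
    set U : ℕ → Set ℝ := fun n => Icc (0:ℝ) s ∩ h ⁻¹' (Iic ((lam + 1/(n+1) : ℝ) : EReal)) with hU
    have hUne : ∀ n, (U n).Nonempty := by
      intro n
      obtain ⟨r, hr, hlt⟩ := hng (1/(n+1)) (by positivity)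
      exact ⟨r, hr, le_of_lt hlt⟩
    have hUcl : ∀ n, IsClosed (U n) := fun n =>
      isClosed_Icc.inter (hlsch.isClosed_preimage _)
    have hUsub : ∀ n, U (n+1) ⊆ U n := by
      intro n r hr
      obtain ⟨h1, h2⟩ := hr
      refine ⟨h1, ?_⟩
      simp only [mem_preimage, mem_Iic] at h2 ⊢
      refine le_trans h2 (EReal.coe_le_coe_iff.mpr ?_)
      have : (1:ℝ)/(n+1+1) ≤ 1/(n+1) := by
        apply one_div_le_one_div_of_le <;> push_cast <;> linarith
      push_cast at this ⊢
      linarith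
    have hU0 : IsCompact (U 0) :=
      isCompact_Icc.of_isClosed_subset (hUcl 0) inter_subset_left
    obtain ⟨r0, hr0⟩ := IsCompact.nonempty_iInter_of_sequence_nonempty_isCompact_isClosed
      U hUsub hUne hU0 hUcl
    simp only [mem_iInter] at hr0
    have hle : h r0 ≤ ((lam : ℝ) : EReal) := by
      have htends : Tendsto (fun n : ℕ => ((lam + 1/(n+1) : ℝ) : EReal)) atTop
          (𝓝 ((lam : ℝ) : EReal)) := by
        apply (continuous_coe_real_ereal.tendsto lam).comp
        have := tendsto_one_div_add_atTop_nhds_zero_nat (𝕜 := ℝ)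
        have h2 := tendsto_const_nhds (x := lam) (f := atTop (α := ℕ)) |>.add this
        simpa using h2
      exact ge_of_tendsto htends (Eventually.of_forall (fun n => (hr0 n).2))
    exact absurd hle (not_le.mpr (hlam_lt _))
  obtain ⟨γ, hγpos, hγ⟩ := hgap
  -- choose T large
  obtain ⟨T, hTpos, hT1, hT2⟩ : ∃ T : ℝ, 0 < T ∧ s*(1+ε) < γ*T ∧ s*(1+ε) ≤ (β-c)*T := by
    refine ⟨max (s*(1+ε)/γ + 1) (s*(1+ε)/(β-c)), ?_, ?_, ?_⟩
    · have h1 : (0:ℝ) ≤ s*(1+ε)/γ := by positivity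
      have := le_max_left (s*(1+ε)/γ + 1) (s*(1+ε)/(β-c))
      linarith
    · have h1 : s*(1+ε)/γ + 1 ≤ max (s*(1+ε)/γ + 1) (s*(1+ε)/(β-c)) := le_max_left _ _
      have h2 : γ * (s*(1+ε)/γ + 1) = s*(1+ε) + γ := by field_simp
      nlinarith [mul_le_mul_of_nonneg_left h1 hγpos.le]
    · have hβc : 0 < β - c := by linarith
      have h1 : s*(1+ε)/(β-c) ≤ max (s*(1+ε)/γ + 1) (s*(1+ε)/(β-c)) := le_max_right _ _
      have h2 : (β-c) * (s*(1+ε)/(β-c)) = s*(1+ε) := by field_simp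
      nlinarith [mul_le_mul_of_nonneg_left h1 hβc.le]
  -- the epigraph
  set E : Set (X × ℝ) := {z : X × ℝ | Φ z.1 ≤ ((z.2 : ℝ) : EReal)} with hE
  have hEclosed : IsClosed E := by
    have hcont : Continuous (fun z : X × ℝ => (z.1, ((z.2 : ℝ) : EReal))) :=
      continuous_fst.prodMk (continuous_coe_real_ereal.comp continuous_snd)
    exact (hlsc.isClosed_epigraph).preimage hcont
  have hEconv : Convex ℝ E := by
    intro z₁ hz₁ z₂ hz₂ a b ha hb hab
    obtain ⟨a₁, ha₁, ha₁'⟩ := hreal z₁.1 z₁.2 hz₁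
    obtain ⟨a₂, ha₂, ha₂'⟩ := hreal z₂.1 z₂.2 hz₂
    have hb' : b = 1 - a := by linarith
    have hkey := hconv z₁.1 z₂.1 a ha (by linarith)
    rw [ha₁, ha₂] at hkey
    simp only [hE, mem_setOf_eq]
    have hstep : ((a:ℝ):EReal) * ((a₁:ℝ):EReal) + (((1-a:ℝ)):EReal) * ((a₂:ℝ):EReal)
        = (((a*a₁ + (1-a)*a₂ : ℝ)):EReal) := by
      norm_cast
    rw [hb']
    refine le_trans hkey (le_trans (le_of_eq hstep) (EReal.coe_le_coe_iff.mpr ?_))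
    have k1 : a * a₁ ≤ a * z₁.2 := mul_le_mul_of_nonneg_left ha₁' ha
    have k2 : (1-a) * a₂ ≤ (1-a) * z₂.2 := mul_le_mul_of_nonneg_left ha₂' (by linarith)
    have : (a • z₁ + (1-a) • z₂).2 = a * z₁.2 + (1-a) * z₂.2 := rfl
    rw [this]
    linarith
  -- the segment
  set A : X × ℝ := (xb, c - ε) with hA
  set B : X × ℝ := (xb + T • v, c + 1) with hB
  have hKcompact : IsCompact (segment ℝ A B) := by
    rw [segment_eq_image]
    apply isCompact_Icc.image
    exact ((continuous_const.sub continuous_id).smul continuous_const).add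
      (continuous_id.smul continuous_const)
  have hKconv : Convex ℝ (segment ℝ A B) := convex_segment A B
  -- disjointness
  have hdisj : Disjoint (segment ℝ A B) E := by
    rw [disjoint_left]
    intro z hz hzE
    rw [segment_eq_image] at hz
    obtain ⟨θ, hθ, hθz⟩ := hz
    obtain ⟨hθ0, hθ1⟩ := hθ
    have hz1 : z.1 = xb + (θ * T) • v := by
      rw [← hθz]
      simp only [Prod.smul_fst, Prod.fst_add, hA, hB, smul_add, smul_smul]
      module
    have hz2 : z.2 = c - ε + θ * (1 + ε) := by
      rw [← hθz]
      have : ((1-θ) • A + θ • B).2 = (1-θ) * (c - ε) + θ * (c+1) := rfl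
      rw [this]; ring
    set tt : ℝ := θ * T with htt
    have htt0 : 0 ≤ tt := mul_nonneg hθ0 hTpos.le
    have hzmem : Φ (xb + tt • v) ≤ ((c - ε + θ * (1+ε) : ℝ) : EReal) := by
      rw [← hz1, ← hz2]; exact hzE
    rcases le_or_gt tt s with hts | hts
    · -- small t: contradicts the gap
      have hgam := hγ tt ⟨htt0, hts⟩
      have : ((lam + γ : ℝ) : EReal) ≤ ((c - ε + θ * (1+ε) : ℝ) : EReal) :=
        le_trans hgam hzmem
      have hre : lam + γ ≤ c - ε + θ * (1+ε) := EReal.coe_le_coe_iff.mp this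
      -- θ * (1+ε) * T = tt * (1+ε) ≤ s * (1+ε) < γ * T ; c - ε ≤ lam
      have hcε : c - ε ≤ lam := by linarith
      have h1 : γ ≤ θ * (1+ε) := by linarith
      have h2 : γ * T ≤ θ * (1+ε) * T := mul_le_mul_of_nonneg_right h1 hTpos.le
      have h3 : θ * (1+ε) * T = tt * (1+ε) := by rw [htt]; ring
      have h4 : tt * (1+ε) ≤ s * (1+ε) := mul_le_mul_of_nonneg_right hts (by linarith)
      linarith
    · -- large t: contradicts convexity and β
      obtain ⟨a, haeq, hale⟩ := hreal _ _ hzmem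
      have httpos : 0 < tt := lt_trans hs hts
      set θ' : ℝ := s / tt with hθ'
      have hθ'0 : 0 ≤ θ' := by positivity
      have hθ'1 : θ' ≤ 1 := by
        rw [hθ']; exact (div_le_one httpos).mpr hts.le
      have hkey := hconv (xb + tt • v) xb θ' hθ'0 hθ'1
      have hpt : θ' • (xb + tt • v) + (1 - θ') • xb = xb + s • v := by
        have : θ' * tt = s := div_mul_cancel₀ s (ne_of_gt httpos)
        rw [smul_add, smul_smul, this]
        module
      rw [hpt, haeq, hc] at hkey
      have hcast : ((θ' : ℝ) : EReal) * ((a : ℝ) : EReal) + (((1 - θ' : ℝ)) : EReal) * ((c : ℝ) : EReal)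
          = ((θ' * a + (1 - θ') * c : ℝ) : EReal) := by norm_cast
      rw [hcast] at hkey
      have hβlt : (β : EReal) < ((θ' * a + (1 - θ') * c : ℝ) : EReal) := lt_of_lt_of_le hβ2 hkey
      have hβre : β < θ' * a + (1 - θ') * c := EReal.coe_lt_coe_iff.mp hβlt
      -- multiply by tt : tt * β < s * a + (tt - s) * c
      have hm1 : tt * β < s * a + (tt - s) * c := by
        have := mul_lt_mul_of_pos_left hβre httpos
        have hθ't : tt * θ' = s := by
          rw [hθ']; field_simp
        nlinarith [hθ't]
      -- a ≤ c - ε + θ * (1+ε), and θ*(s*(1+ε)) ≤ θ*((β-c)*T)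
      have hm2 : θ * (s * (1+ε)) ≤ θ * ((β - c) * T) := mul_le_mul_of_nonneg_left hT2 hθ0
      have hm3 : θ * ((β - c) * T) = tt * (β - c) := by rw [htt]; ring
      have hm4 : s * a ≤ s * (c - ε + θ * (1+ε)) := mul_le_mul_of_nonneg_left hale hs.le
      -- s * (θ * (1+ε)) = θ * (s * (1+ε)) ≤ tt * (β - c)
      have hexp1 : s * (c - ε + θ * (1+ε)) = s*c - s*ε + θ * (s * (1+ε)) := by ring
      have hexp2 : s * a + (tt - s) * c = s * a + tt * c - s * c := by ring
      have hexp3 : tt * (β - c) = tt * β - tt * c := by ring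
      have hpos : 0 < s * ε := mul_pos hs hεpos
      linarith
  -- separation
  obtain ⟨F, u, w, hFK, huw, hFE⟩ :=
    geometric_hahn_banach_compact_closed hKconv hKcompact hEconv hEclosed hdisj
  -- decompose F
  set p : X →L[ℝ] ℝ := F.comp (ContinuousLinearMap.inl ℝ X ℝ) with hp
  set r : ℝ := F (0, 1) with hr
  have hF : ∀ (x : X) (μ : ℝ), F (x, μ) = p x + μ * r := by
    intro x μ
    have hxμ : (x, μ) = (x, (0:ℝ)) + μ • ((0:X), (1:ℝ)) := by
      simp [Prod.ext_iff]
    rw [hxμ, map_add, map_smul]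
    simp [hp, hr, smul_eq_mul]
  -- memberships
  have hAK : A ∈ segment ℝ A B := left_mem_segment ℝ A B
  have hBK : B ∈ segment ℝ A B := right_mem_segment ℝ A B
  have hxbE : (xb, c) ∈ E := by
    simp only [hE, mem_setOf_eq, hc, le_refl]
  have ineqA : p xb + (c - ε) * r < u := by
    have := hFK A hAK
    rwa [hA, hF] at this
  have ineqB : p (xb + T • v) + (c + 1) * r < u := by
    have := hFK B hBK
    rwa [hB, hF] at this
  have ineqC : w < p xb + c * r := by
    have := hFE (xb, c) hxbE
    rwa [hF] at this
  -- r > 0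
  have hrpos : 0 < r := by
    have h0 : (c - ε) * r < c * r := by linarith
    have h1 : c * r - (c - ε) * r = ε * r := by ring
    have hεr : 0 < ε * r := by linarith
    rcases mul_pos_iff.mp hεr with ⟨_, h⟩ | ⟨h, _⟩
    · exact h
    · linarith
  -- p v < 0
  have hpv : T * p v + r < 0 := by
    have hpB : p (xb + T • v) = p xb + T * p v := by
      rw [map_add, map_smul]; simp [smul_eq_mul]
    rw [hpB] at ineqB
    linarith
  have hpvneg : p v < 0 := by
    by_contra hn
    push_neg at hn
    have : 0 ≤ T * p v := mul_nonneg hTpos.le hn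
    linarith
  -- the subgradient
  set q : X →L[ℝ] ℝ := (-r⁻¹) • p with hq
  have hqv : 0 < q v := by
    have h0 : q v = -r⁻¹ * p v := rfl
    have h1 : -r⁻¹ * p v = r⁻¹ * (-p v) := by ring
    rw [h0, h1]
    exact mul_pos (inv_pos.mpr hrpos) (neg_pos.mpr hpvneg)
  have hqmem : q ∈ SubdiffAt Φ xb ε := by
    intro u₁
    rcases eq_or_ne (Φ u₁) ⊤ with htop | htop
    · rw [htop, EReal.top_add_of_ne_bot (by simp : ((ε:ℝ):EReal) ≠ ⊥)]
      exact le_top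
    · set a₁ : ℝ := (Φ u₁).toReal with ha₁
      have hu₁ : Φ u₁ = (a₁ : EReal) := (EReal.coe_toReal htop (hbot u₁)).symm
      have hu₁E : (u₁, a₁) ∈ E := by
        simp only [hE, mem_setOf_eq, hu₁, le_refl]
      have ineqD : w < p u₁ + a₁ * r := by
        have := hFE (u₁, a₁) hu₁E
        rwa [hF] at this
      have hchain : p xb + (c - ε) * r < p u₁ + a₁ * r := by linarith
      have hqval : q (u₁ - xb) = -r⁻¹ * (p u₁ - p xb) := by
        rw [hq]; simp [map_sub, smul_eq_mul]; ring
      have hgoal : c + q (u₁ - xb) ≤ a₁ + ε := by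
        rw [hqval]
        have h1 : (c - ε - a₁) * r < p u₁ - p xb := by linarith
        have h2 : c - ε - a₁ < (p u₁ - p xb) * r⁻¹ := by
          rw [← div_eq_mul_inv]
          exact (lt_div_iff₀ hrpos).mpr h1
        linarith
      rw [hc, hu₁]
      have : ((c : ℝ) : EReal) + ((q (u₁ - xb) : ℝ) : EReal) = ((c + q (u₁ - xb) : ℝ) : EReal) := by
        norm_cast
      rw [this]
      have : ((a₁ : ℝ) : EReal) + ((ε : ℝ) : EReal) = ((a₁ + ε : ℝ) : EReal) := by norm_cast
      rw [this]
      exact EReal.coe_le_coe_iff.mpr hgoal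
  exact absurd (hv q hqmem) (not_le.mpr hqv)
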